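/- Let K be an algebraically closed field of characteristic 0 and let A be the 2n×2n block-diagonal matrix with n copies of the block [[0,1],[0,0]]. Then for every decomposition A = Σᵢ₌₁ᵏ (aᵢ uᵢ⊗vᵢ + bᵢ vᵢ⊗uᵢ) with uᵢ,vᵢ ∈ K^{2n}, we have k ≥ n; i.e., str(A) = rk(A) = n. -/

import Mathlib

open Matrix

section Aux

variable {K : Type*} [Field K] {m : Type*} [Fintype m] [DecidableEq m]

lemma aux_rank_add_le (A B : Matrix m m K) : (A + B).rank ≤ A.rank + B.rank := by
  have hr : LinearMap.range (A + B).mulVecLin ≤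
      LinearMap.range A.mulVecLin ⊔ LinearMap.range B.mulVecLin := by
    rintro x ⟨y, rfl⟩
    rw [Matrix.mulVecLin_add]
    exact Submodule.add_mem _ (Submodule.mem_sup_left ⟨y, rfl⟩)
      (Submodule.mem_sup_right ⟨y, rfl⟩)
  calc (A + B).rank ≤ Module.finrank K
        (LinearMap.range A.mulVecLin ⊔ LinearMap.range B.mulVecLin : Submodule K (m → K)) :=
        Submodule.finrank_mono hr
    _ ≤ A.rank + B.rank := Submodule.finrank_add_le_finrank_add_finrank _ _

lemma aux_rank_sum_le {ι : Type*} (s : Finset ι) (M : ι → Matrix m m K) :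
    (∑ i ∈ s, M i).rank ≤ ∑ i ∈ s, (M i).rank := by
  classical
  induction s using Finset.induction_on with
  | empty => simp
  | insert _ _ h ih =>
      rw [Finset.sum_insert h, Finset.sum_insert h]
      exact (aux_rank_add_le _ _).trans (add_le_add_right ih _)

lemma aux_rank_vecMulVec_le (u v : m → K) : (vecMulVec u v).rank ≤ 1 := by
  rw [vecMulVec_eq (Fin 1)]
  exact (Matrix.rank_mul_le_left _ _).trans
    ((Matrix.rank_le_card_width _).trans_eq (Fintype.card_fin 1))

lemma aux_smul_vecMulVec (c : K) (u v : m → K) :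
    c • vecMulVec u v = vecMulVec (c • u) v := by
  ext i j
  simp [vecMulVec_apply, mul_assoc]

lemma aux_vecMulVec_transpose (u v : m → K) :
    (vecMulVec u v)ᵀ = vecMulVec v u := by
  ext i j
  simp [vecMulVec_apply, mul_comm]

end Aux

/-- For the `2n × 2n` block-diagonal matrix with `n` copies of `[[0,1],[0,0]]`, every
decomposition into `k` summands of the form `a • u⊗v + b • v⊗u` has `k ≥ n`;
moreover `rank A = n`, so `str A = rank A = n`. -/
theorem stmt3 (K : Type*) [Field K] [IsAlgClosed K] [CharZero K]
    (n : ℕ) (A : Matrix (Fin (2 * n)) (Fin (2 * n)) K)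
    (hA : A = Matrix.of fun i j => if i.1 % 2 = 0 ∧ j.1 = i.1 + 1 then (1 : K) else 0) :
    (∀ (k : ℕ) (a b : Fin k → K) (u v : Fin k → (Fin (2 * n) → K)),
        A = ∑ i, (a i • vecMulVec (u i) (v i) + b i • vecMulVec (v i) (u i)) → n ≤ k) ∧
    A.rank = n := by
  classical
  -- the pair-swapping involution
  have hbound : ∀ i : Fin (2 * n),
      (if i.1 % 2 = 0 then i.1 + 1 else i.1 - 1) < 2 * n := by
    intro i; have := i.2; split_ifs with h <;> omega
  set f : Fin (2 * n) → Fin (2 * n) :=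
    fun i => ⟨if i.1 % 2 = 0 then i.1 + 1 else i.1 - 1, hbound i⟩ with hf
  have hinv : Function.Involutive f := by
    intro i
    have := i.2
    apply Fin.ext
    simp only [hf]
    split_ifs <;> omega
  set σ : Equiv.Perm (Fin (2 * n)) := hinv.toPerm f with hσ
  have hσval : ∀ i : Fin (2 * n),
      (σ i).1 = if i.1 % 2 = 0 then i.1 + 1 else i.1 - 1 := fun i => rfl
  have hP : ∀ i j : Fin (2 * n),
      σ.permMatrix K i j = if j.1 = (if i.1 % 2 = 0 then i.1 + 1 else i.1 - 1)
        then (1 : K) else 0 := by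
    intro i j
    rw [Equiv.Perm.permMatrix, PEquiv.toMatrix_apply, Equiv.toPEquiv_apply]
    have : (j ∈ (some (σ i))) ↔ j.1 = (if i.1 % 2 = 0 then i.1 + 1 else i.1 - 1) := by
      rw [Option.mem_def, Option.some_inj]
      constructor
      · rintro rfl; exact hσval i
      · intro h; exact (Fin.ext (h.trans (hσval i).symm)).symm
    simp only [this]
  have hdet : IsUnit (σ.permMatrix K).det := by
    rw [Matrix.det_permutation]
    rcases Int.units_eq_one_or (Equiv.Perm.sign σ) with h | h <;> rw [h] <;> simp
  -- A + Aᵀ is the permutation matrix of σ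
  have hAT : A + Aᵀ = σ.permMatrix K := by
    ext i j
    have hi := i.2; have hj := j.2
    rw [Matrix.add_apply, Matrix.transpose_apply, hA, hP]
    simp only [Matrix.of_apply]
    split_ifs <;> first | omega | (exfalso; omega) | norm_num
  have hrankAT : (A + Aᵀ).rank = 2 * n := by
    rw [hAT, Matrix.rank_of_isUnit _ ((Matrix.isUnit_iff_isUnit_det _).mpr hdet),
      Fintype.card_fin]
  constructor
  · -- lower bound on the number of summands
    intro k a b u v hd
    have hATsum : A + Aᵀ = ∑ i, ((a i + b i) • vecMulVec (u i) (v i)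
        + (a i + b i) • vecMulVec (v i) (u i)) := by
      rw [hd, Matrix.transpose_sum, ← Finset.sum_add_distrib]
      refine Finset.sum_congr rfl fun i _ => ?_
      rw [Matrix.transpose_add, Matrix.transpose_smul, Matrix.transpose_smul,
        aux_vecMulVec_transpose, aux_vecMulVec_transpose]
      module
    have hle : (A + Aᵀ).rank ≤ ∑ _i : Fin k, 2 := by
      rw [hATsum]
      refine (aux_rank_sum_le _ _).trans (Finset.sum_le_sum fun i _ => ?_)
      refine (aux_rank_add_le _ _).trans ?_
      rw [aux_smul_vecMulVec, aux_smul_vecMulVec]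
      exact add_le_add (aux_rank_vecMulVec_le _ _) (aux_rank_vecMulVec_le _ _)
    rw [hrankAT] at hle
    simp only [Finset.sum_const, Finset.card_univ, Fintype.card_fin, smul_eq_mul] at hle
    omega
  · -- rank A = n
    set d : Fin (2 * n) → K := fun i => if i.1 % 2 = 0 then 1 else 0 with hdd
    have hAfact : A = Matrix.diagonal d * σ.permMatrix K := by
      ext i j
      have hi := i.2; have hj := j.2
      rw [Matrix.diagonal_mul, hA, hP]
      simp only [Matrix.of_apply, hdd]
      split_ifs <;> first | omega | (exfalso; omega) | norm_num
    rw [hAfact, Matrix.rank_mul_eq_left_of_isUnit_det _ _ hdet, Matrix.rank_diagonal]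
    have he : ∀ i : Fin (2 * n), d i ≠ 0 ↔ i.1 % 2 = 0 := by
      intro i
      by_cases h : i.1 % 2 = 0 <;> simp [hdd, h]
    rw [Fintype.card_congr (Equiv.subtypeEquivRight he)]
    have e : {i : Fin (2 * n) // i.1 % 2 = 0} ≃ Fin n :=
      { toFun := fun x => ⟨x.1.1 / 2, by have := x.1.2; have := x.2; omega⟩
        invFun := fun k => ⟨⟨2 * k.1, by have := k.2; omega⟩, by show 2 * k.1 % 2 = 0; omega⟩
        left_inv := fun x => by
          apply Subtype.ext; apply Fin.ext
          show 2 * (x.1.1 / 2) = x.1.1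
          have := x.2; omega
        right_inv := fun k => by
          apply Fin.ext
          show 2 * k.1 / 2 = k.1
          omega }
    rw [Fintype.card_congr e, Fintype.card_fin]
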